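/- Let S be a finite poset and k a field. Every S-space is semisimple (isomorphic to a direct sum of S-spaces with one-dimensional ambient space) if and only if the width of S is at most 2. -/

import Mathlib

/-- An `S`-space over a field `k`: a finite-dimensional `k`-vector space together with a
monotone family of subspaces indexed by the poset `S`. -/
structure PSp (k : Type) [Field k] (S : Type) [Preorder S] where
  carrier : Type
  [acg : AddCommGroup carrier]
  [mod : Module k carrier]
  [fin : FiniteDimensional k carrier]
  sub : S → Submodule k carrier
  mono : ∀ {s t : S}, s ≤ t → sub s ≤ sub t

attribute [instance] PSp.acg PSp.mod PSp.fin

variable {k : Type} [Field k] {S : Type} [PartialOrder S] [Fintype S]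

/-- A morphism of `S`-spaces: a `k`-linear map respecting the distinguished subspaces. -/
@[ext]
structure PHom (U V : PSp k S) where
  toLinearMap : U.carrier →ₗ[k] V.carrier
  maps : ∀ s : S, ∀ x ∈ U.sub s, toLinearMap x ∈ V.sub s

/-- Composition of morphisms of `S`-spaces. -/
def PHom.comp {U V W : PSp k S} (g : PHom V W) (f : PHom U V) : PHom U W :=
  ⟨g.toLinearMap ∘ₗ f.toLinearMap, fun s x hx => g.maps s _ (f.maps s x hx)⟩

/-- The identity morphism of an `S`-space. -/
def PHom.id (U : PSp k S) : PHom U U := ⟨LinearMap.id, fun _ _ hx => hx⟩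

/-- A morphism `f : U → V` of `S`-spaces is proper if `f(U(s)) = V(s) ∩ im f` for all `s`. -/
def PHom.Proper {U V : PSp k S} (f : PHom U V) : Prop :=
  ∀ s : S, (U.sub s).map f.toLinearMap = V.sub s ⊓ LinearMap.range f.toLinearMap

open Classical in
/-- The `S`-space `k_A` associated to an antichain `A`: ambient space `k`, with subspace
`k` at `s` iff `a ≤ s` for some `a ∈ A`, and `0` otherwise. -/
noncomputable def kASp (k : Type) [Field k] {S : Type} [PartialOrder S] (A : Set S) :
    PSp k S where
  carrier := k
  sub s := if ∃ a ∈ A, a ≤ s then ⊤ else ⊥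
  mono := by
    intro s t h
    try dsimp only
    by_cases hs : ∃ a ∈ A, a ≤ s
    · obtain ⟨a, ha, has⟩ := hs
      rw [if_pos ⟨a, ha, has⟩, if_pos ⟨a, ha, has.trans h⟩]
    · rw [if_neg hs]
      exact bot_le

/-- Isomorphism of `S`-spaces. -/
def PIso {k : Type} [Field k] {S : Type} [PartialOrder S] (U V : PSp k S) : Prop :=
  ∃ (f : PHom U V) (g : PHom V U), f.comp g = PHom.id V ∧ g.comp f = PHom.id U

/-- A nonzero `S`-space is simple if every nonzero proper monomorphism into it is an
isomorphism. -/
def PSimple {k : Type} [Field k] {S : Type} [PartialOrder S] (V : PSp k S) : Prop :=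
  (∃ x : V.carrier, x ≠ 0) ∧
  ∀ (U : PSp k S) (g : PHom U V), g.toLinearMap ≠ 0 → Function.Injective g.toLinearMap →
    g.Proper → ∃ h : PHom V U, g.comp h = PHom.id V ∧ h.comp g = PHom.id U

/-- The direct sum of a finite family of `S`-spaces. -/
def dSum {n : ℕ} (W : Fin n → PSp k S) : PSp k S where
  carrier := ∀ i, (W i).carrier
  sub s := Submodule.pi Set.univ fun i => (W i).sub s
  mono := by
    intro s t h x hx i hi
    exact (W i).mono h (hx i hi)


lemma chain_finset_max {α : Type*} [PartialOrder α] {C : Finset α}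
    (hC : IsChain (· ≤ ·) (↑C : Set α)) (h : C.Nonempty) :
    ∃ m ∈ C, ∀ x ∈ C, x ≤ m := by
  obtain ⟨m, hm, hmax⟩ := C.exists_maximal h
  refine ⟨m, hm, fun x hx => ?_⟩
  rcases eq_or_ne x m with rfl | hne
  · exact le_refl x
  · rcases hC hx hm hne with h | h
    · exact h
    · exact absurd (lt_of_le_of_ne h (fun e => hne e.symm)) (fun hlt => not_le_of_gt hlt (hmax hx hlt.le))

lemma dilworth2_step {α : Type*} [PartialOrder α] [DecidableEq α] (P C1 C2 : Finset α) (a : α)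
    (ha : a ∈ P) (hU : C1 ∪ C2 = P.erase a)
    (h1 : IsChain (· ≤ ·) (↑C1 : Set α)) (h2 : IsChain (· ≤ ·) (↑C2 : Set α))
    (m : α) (hma : m ≤ a)
    (hm : ∀ x ∈ C1, (∃ y ∈ C2, ¬ x ≤ y ∧ ¬ y ≤ x) → x ≤ m) :
    ∃ D1 D2 : Finset α, D1 ∪ D2 = P ∧ IsChain (· ≤ ·) (↑D1 : Set α) ∧
      IsChain (· ≤ ·) (↑D2 : Set α) := by
  classical
  set K : Finset α := insert a (C1.filter (fun x => x ≤ m)) with hK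
  have hKP : K ⊆ P := by
    intro x hx
    rcases Finset.mem_insert.1 hx with rfl | hx
    · exact ha
    · have hx1 : x ∈ C1 := (Finset.mem_filter.1 hx).1
      have : x ∈ C1 ∪ C2 := Finset.mem_union_left _ hx1
      rw [hU] at this
      exact Finset.mem_of_mem_erase this
  refine ⟨K, P \ K, ?_, ?_, ?_⟩
  · exact Finset.union_sdiff_of_subset hKP
  · intro x hx y hy hxy
    simp only [Finset.coe_insert, Set.mem_insert_iff, Finset.mem_coe, hK] at hx hy
    rcases hx with rfl | hx <;> rcases hy with rfl | hy
    · exact absurd rfl hxy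
    · exact Or.inr ((Finset.mem_filter.1 hy).2.trans hma)
    · exact Or.inl ((Finset.mem_filter.1 hx).2.trans hma)
    · exact h1 (Finset.mem_coe.2 (Finset.mem_filter.1 hx).1)
        (Finset.mem_coe.2 (Finset.mem_filter.1 hy).1) hxy
  · intro x hx y hy hxy
    simp only [Finset.coe_sdiff, Set.mem_diff, Finset.mem_coe] at hx hy
    have hxa : x ≠ a := fun e => hx.2 (by simp [hK, e])
    have hya : y ≠ a := fun e => hy.2 (by simp [hK, e])
    have hx' : x ∈ C1 ∪ C2 := by rw [hU]; exact Finset.mem_erase.2 ⟨hxa, hx.1⟩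
    have hy' : y ∈ C1 ∪ C2 := by rw [hU]; exact Finset.mem_erase.2 ⟨hya, hy.1⟩
    by_contra hcon
    push_neg at hcon
    rcases Finset.mem_union.1 hx' with hx1 | hx2 <;> rcases Finset.mem_union.1 hy' with hy1 | hy2
    · exact absurd (h1 (Finset.mem_coe.2 hx1) (Finset.mem_coe.2 hy1) hxy) (by tauto)
    · have : x ≤ m := hm x hx1 ⟨y, hy2, hcon.1, hcon.2⟩
      exact hx.2 (by simp [hK, Finset.mem_filter, hx1, this])
    · have : y ≤ m := hm y hy1 ⟨x, hx2, hcon.2, hcon.1⟩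
      exact hy.2 (by simp [hK, Finset.mem_filter, hy1, this])
    · exact absurd (h2 (Finset.mem_coe.2 hx2) (Finset.mem_coe.2 hy2) hxy) (by tauto)

lemma dilworth2 {α : Type*} [PartialOrder α] [DecidableEq α] : ∀ (n : ℕ) (P : Finset α), P.card = n →
    (∀ x y z : α, x ∈ P → y ∈ P → z ∈ P →
      (¬ x ≤ y ∧ ¬ y ≤ x) → (¬ x ≤ z ∧ ¬ z ≤ x) → (¬ y ≤ z ∧ ¬ z ≤ y) → False) →
    ∃ C1 C2 : Finset α, C1 ∪ C2 = P ∧ IsChain (· ≤ ·) (↑C1 : Set α) ∧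
      IsChain (· ≤ ·) (↑C2 : Set α) := by
  intro n
  induction n with
  | zero =>
    intro P hP _
    refine ⟨∅, ∅, ?_, by simp [IsChain], by simp [IsChain]⟩
    simp [Finset.card_eq_zero.1 hP]
  | succ n ih =>
    intro P hP h3
    have hne : P.Nonempty := Finset.card_pos.1 (by omega)
    obtain ⟨a, ha, hamax⟩ := P.exists_maximal hne
    have hcard : (P.erase a).card = n := by rw [Finset.card_erase_of_mem ha, hP]; omega
    obtain ⟨C1, C2, hU, h1, h2⟩ := ih (P.erase a) hcard (fun x y z hx hy hz =>
      h3 x y z (Finset.mem_of_mem_erase hx) (Finset.mem_of_mem_erase hy)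
        (Finset.mem_of_mem_erase hz))
    have hsubP : ∀ x ∈ C1 ∪ C2, x ∈ P.erase a := fun x hx => hU ▸ hx
    have hnla : ∀ x, x ∈ P.erase a → ¬ a ≤ x := by
      intro x hx hax
      have hxa : x ≠ a := (Finset.mem_erase.1 hx).1
      exact (not_le_of_gt (lt_of_le_of_ne hax (Ne.symm hxa))) (hamax (Finset.mem_of_mem_erase hx) hax)
    by_cases hA : ∀ x ∈ C1, x ≤ a
    · refine ⟨insert a C1, C2, ?_, ?_, h2⟩
      · rw [Finset.insert_union, hU, Finset.insert_erase ha]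
      · intro x hx y hy hxy
        simp only [Finset.coe_insert, Set.mem_insert_iff, Finset.mem_coe] at hx hy
        rcases hx with rfl | hx <;> rcases hy with rfl | hy
        · exact absurd rfl hxy
        · exact Or.inr (hA y hy)
        · exact Or.inl (hA x hx)
        · exact h1 (Finset.mem_coe.2 hx) (Finset.mem_coe.2 hy) hxy
    by_cases hB : ∀ x ∈ C2, x ≤ a
    · refine ⟨C1, insert a C2, ?_, h1, ?_⟩
      · rw [Finset.union_insert, hU, Finset.insert_erase ha]
      · intro x hx y hy hxy
        simp only [Finset.coe_insert, Set.mem_insert_iff, Finset.mem_coe] at hx hy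
        rcases hx with rfl | hx <;> rcases hy with rfl | hy
        · exact absurd rfl hxy
        · exact Or.inr (hB y hy)
        · exact Or.inl (hB x hx)
        · exact h2 (Finset.mem_coe.2 hx) (Finset.mem_coe.2 hy) hxy
    push_neg at hA hB
    classical
    set S1 : Finset α := C1.filter (fun x => ∃ y ∈ C2, ¬ x ≤ y ∧ ¬ y ≤ x) with hS1
    set S2 : Finset α := C2.filter (fun y => ∃ x ∈ C1, ¬ x ≤ y ∧ ¬ y ≤ x) with hS2
    by_cases hS1e : S1 = ∅
    · -- P.erase a is a chain
      refine ⟨P.erase a, {a}, ?_, ?_, ?_⟩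
      · rw [Finset.union_comm, ← Finset.insert_eq, Finset.insert_erase ha]
      · intro x hx y hy hxy
        have hx' := Finset.mem_coe.1 hx
        have hy' := Finset.mem_coe.1 hy
        rw [← hU] at hx' hy'
        by_contra hcon
        push_neg at hcon
        rcases Finset.mem_union.1 hx' with hx1 | hx2 <;>
          rcases Finset.mem_union.1 hy' with hy1 | hy2
        · exact absurd (h1 (Finset.mem_coe.2 hx1) (Finset.mem_coe.2 hy1) hxy) (by tauto)
        · have : x ∈ S1 := Finset.mem_filter.2 ⟨hx1, y, hy2, hcon.1, hcon.2⟩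
          simp [hS1e] at this
        · have : y ∈ S1 := Finset.mem_filter.2 ⟨hy1, x, hx2, hcon.2, hcon.1⟩
          simp [hS1e] at this
        · exact absurd (h2 (Finset.mem_coe.2 hx2) (Finset.mem_coe.2 hy2) hxy) (by tauto)
      · simp [IsChain, Set.Pairwise]
    · have hS1ne : S1.Nonempty := Finset.nonempty_of_ne_empty hS1e
      obtain ⟨a1, ha1S, ha1max⟩ := chain_finset_max
        (h1.mono (by intro x hx; exact Finset.mem_coe.2 (Finset.mem_filter.1 (Finset.mem_coe.1 hx)).1)) hS1ne
      obtain ⟨ha1C, y1, hy1C, hy1a, hay1⟩ := Finset.mem_filter.1 ha1S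
      have hy1S2 : y1 ∈ S2 := Finset.mem_filter.2 ⟨hy1C, a1, ha1C, hy1a, hay1⟩
      have hS2ne : S2.Nonempty := ⟨y1, hy1S2⟩
      obtain ⟨a2, ha2S, ha2max⟩ := chain_finset_max
        (h2.mono (by intro x hx; exact Finset.mem_coe.2 (Finset.mem_filter.1 (Finset.mem_coe.1 hx)).1)) hS2ne
      obtain ⟨ha2C, z2, hz2C, hz2a, haz2⟩ := Finset.mem_filter.1 ha2S
      have h12 : ¬ a1 ≤ a2 := by
        intro hle
        have : z2 ∈ S1 := Finset.mem_filter.2 ⟨hz2C, a2, ha2C, hz2a, haz2⟩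
        exact hz2a ((ha1max z2 this).trans hle)
      have h21 : ¬ a2 ≤ a1 := by
        intro hle
        exact hay1 ((ha2max y1 hy1S2).trans hle)
      have ha1P : a1 ∈ P.erase a := hsubP a1 (Finset.mem_union_left _ ha1C)
      have ha2P : a2 ∈ P.erase a := hsubP a2 (Finset.mem_union_right _ ha2C)
      have hcmp : a1 ≤ a ∨ a2 ≤ a := by
        by_contra hcon
        push_neg at hcon
        exact h3 a a1 a2 ha (Finset.mem_of_mem_erase ha1P) (Finset.mem_of_mem_erase ha2P)
          ⟨hnla a1 ha1P, hcon.1⟩ ⟨hnla a2 ha2P, hcon.2⟩ ⟨h12, h21⟩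
      rcases hcmp with hle | hle
      · exact dilworth2_step P C1 C2 a ha hU h1 h2 a1 hle
          (fun x hx hex => ha1max x (Finset.mem_filter.2 ⟨hx, hex⟩))
      · obtain ⟨D1, D2, hD, hD1, hD2⟩ := dilworth2_step P C2 C1 a ha
          (by rw [Finset.union_comm]; exact hU) h2 h1 a2 hle
          (fun x hx hex => ha2max x (Finset.mem_filter.2 ⟨hx, by
            obtain ⟨y, hy, hxy, hyx⟩ := hex
            exact ⟨y, hy, hyx, hxy⟩⟩))
        exact ⟨D1, D2, hD, hD1, hD2⟩


section Grid
open Module Submodule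
variable {K X : Type*} [Field K] [AddCommGroup X] [Module K X] [FiniteDimensional K X]

lemma exists_compl_between {E D : Submodule K X} (h : E ≤ D) :
    ∃ W : Submodule K X, W ≤ D ∧ W ⊔ E = D ∧
      finrank K W + finrank K E = finrank K D := by
  obtain ⟨C, hC⟩ := Submodule.exists_isCompl (E.comap D.subtype)
  have hmap : (E.comap D.subtype).map D.subtype = E := by
    rw [Submodule.map_comap_subtype]
    exact inf_eq_right.2 h
  refine ⟨C.map D.subtype, Submodule.map_subtype_le D C, ?_, ?_⟩
  · rw [← hmap, ← Submodule.map_sup, sup_comm, hC.sup_eq_top, Submodule.map_subtype_top]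
  · rw [← hmap, Submodule.finrank_map_subtype_eq, Submodule.finrank_map_subtype_eq]
    have h1 := Submodule.finrank_add_eq_of_isCompl hC
    omega

theorem exists_adapted_basis (F G : ℕ → Submodule K X) (hF : Monotone F) (hG : Monotone G)
    (hF0 : F 0 = ⊥) (hG0 : G 0 = ⊥) {M2 L : ℕ} (hFM : F M2 = ⊤) (hGL : G L = ⊤) :
    ∃ (n : ℕ) (b : Basis (Fin n) K X),
      (∀ p, F p = span K (Set.range ⇑b ∩ F p)) ∧
      (∀ q, G q = span K (Set.range ⇑b ∩ G q)) := by
  classical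
  have hE : ∀ i j : ℕ, (F i ⊓ G (j+1)) ⊔ (F (i+1) ⊓ G j) ≤ F (i+1) ⊓ G (j+1) :=
    fun i j => sup_le (inf_le_inf (hF (Nat.le_succ i)) le_rfl)
      (inf_le_inf le_rfl (hG (Nat.le_succ j)))
  choose W hWle hWsup hWrank using fun i j => exists_compl_between (hE i j)
  have hinf : ∀ i j : ℕ, (F i ⊓ G (j+1)) ⊓ (F (i+1) ⊓ G j) = F i ⊓ G j := by
    intro i j
    apply le_antisymm
    · exact le_inf (le_trans inf_le_left inf_le_left) (le_trans inf_le_right inf_le_right)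
    · exact le_inf (le_inf inf_le_left (le_trans inf_le_right (hG (Nat.le_succ j))))
        (le_inf (le_trans inf_le_left (hF (Nat.le_succ i))) inf_le_right)
  -- the sup claim
  have claim1 : ∀ p q : ℕ,
      (Finset.range p).sup (fun i => (Finset.range q).sup (fun j => W i j)) = F p ⊓ G q := by
    intro p
    induction p with
    | zero => intro q; simp [hF0]
    | succ p ihp =>
      intro q
      induction q with
      | zero => simp [hG0]
      | succ q ihq =>
        rw [Finset.range_add_one, Finset.sup_insert]
        have houter : ∀ q', (Finset.range (p+1)).sup
            (fun i => (Finset.range q').sup (fun j => W i j)) =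
            (Finset.range q').sup (fun j => W p j) ⊔
            (Finset.range p).sup (fun i => (Finset.range q').sup (fun j => W i j)) := by
          intro q'; rw [Finset.range_add_one, Finset.sup_insert]
        rw [houter] at ihq
        rw [ihp (q+1)]
        -- inner: (range (q+1)).sup (W p) = W p q ⊔ (range q).sup (W p)
        rw [Finset.range_add_one, Finset.sup_insert]
        -- use ihq : (range q).sup (W p) ⊔ (F p ⊓ G q) = F (p+1) ⊓ G q  (after rw ihp q)
        rw [ihp q] at ihq
        have hD : F (p+1) ⊓ G (q+1) = W p q ⊔ ((F p ⊓ G (q+1)) ⊔ (F (p+1) ⊓ G q)) :=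
          (hWsup p q).symm
        rw [hD, ← ihq]
        have hmono : F p ⊓ G q ≤ F p ⊓ G (q+1) := inf_le_inf le_rfl (hG (Nat.le_succ q))
        apply le_antisymm
        · exact sup_le (sup_le le_sup_left
            (le_sup_of_le_right (le_sup_of_le_right le_sup_left)))
            (le_sup_of_le_right le_sup_left)
        · exact sup_le (le_sup_of_le_left le_sup_left) (sup_le le_sup_right
            (sup_le (le_sup_of_le_left le_sup_right) (le_trans hmono le_sup_right)))
  -- the rank claim
  have claim2 : ∀ p q : ℕ,
      (∑ i ∈ Finset.range p, ∑ j ∈ Finset.range q, finrank K ↥(W i j)) =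
        finrank K ↥(F p ⊓ G q) := by
    intro p
    induction p with
    | zero => intro q; rw [hF0, bot_inf_eq, finrank_bot K X]; simp
    | succ p ihp =>
      intro q
      induction q with
      | zero => rw [hG0, inf_bot_eq, finrank_bot K X]; simp
      | succ q ihq =>
        rw [Finset.sum_range_succ, ihp (q+1), Finset.sum_range_succ]
        rw [Finset.sum_range_succ, ihp q] at ihq
        have hsi := Submodule.finrank_sup_add_finrank_inf_eq (F p ⊓ G (q+1)) (F (p+1) ⊓ G q)
        rw [hinf p q] at hsi
        have hwr := hWrank p q
        omega
  have htop : (Finset.range M2).sup (fun i => (Finset.range L).sup (fun j => W i j)) = ⊤ := by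
    rw [claim1 M2 L, hFM, hGL, top_inf_eq]
  set v : ((x : Fin M2 × Fin L) × Fin (finrank K ↥(W x.1 x.2))) → X :=
    fun x => ((finBasis K (W x.1.1 x.1.2)) x.2 : X) with hv
  have hWspan : ∀ i j : ℕ,
      span K (Set.range (fun t : Fin (finrank K ↥(W i j)) =>
        ((finBasis K (W i j)) t : X))) = W i j := by
    intro i j
    have he : Set.range (fun t : Fin (finrank K ↥(W i j)) => ((finBasis K (W i j)) t : X)) =
        (W i j).subtype '' Set.range (finBasis K (W i j)) := by
      rw [← Set.range_comp]; rfl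
    rw [he, ← Submodule.map_span, Basis.span_eq, Submodule.map_subtype_top]
  have hWv : ∀ (i j : ℕ), i < M2 → j < L → W i j ≤ span K (Set.range v) := by
    intro i j hi hj
    rw [← hWspan i j]
    apply span_le.2
    rintro x ⟨t, rfl⟩
    exact subset_span ⟨⟨(⟨i, hi⟩, ⟨j, hj⟩), t⟩, rfl⟩
  have hspan : ⊤ ≤ span K (Set.range v) := by
    rw [← htop]
    apply Finset.sup_le
    intro i hi
    apply Finset.sup_le
    intro j hj
    exact hWv i j (Finset.mem_range.1 hi) (Finset.mem_range.1 hj)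
  have hcard : Fintype.card ((x : Fin M2 × Fin L) × Fin (finrank K ↥(W x.1 x.2))) =
      finrank K X := by
    rw [Fintype.card_sigma]
    simp only [Fintype.card_fin]
    rw [Fintype.sum_prod_type]
    have h2 := claim2 M2 L
    rw [hFM, hGL, top_inf_eq, finrank_top] at h2
    rw [← h2, ← Fin.sum_univ_eq_sum_range (fun i => ∑ j ∈ Finset.range L, finrank K ↥(W i j)) M2]
    apply Finset.sum_congr rfl
    intro i _
    rw [← Fin.sum_univ_eq_sum_range]
  let b := basisOfTopLeSpanOfCardEqFinrank v hspan hcard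
  have hb : Set.range ⇑b = Set.range v := by
    rw [coe_basisOfTopLeSpanOfCardEqFinrank]
  have hadaptF : ∀ p, F p ≤ span K (Set.range v ∩ F p) := by
    intro p
    rcases le_or_gt p M2 with hpM | hpM
    · have h1 : F p = F p ⊓ G L := by rw [hGL, inf_top_eq]
      conv_lhs => rw [h1, ← claim1 p L]
      apply Finset.sup_le
      intro i hi
      apply Finset.sup_le
      intro j hj
      have hiM : i < M2 := lt_of_lt_of_le (Finset.mem_range.1 hi) hpM
      rw [← hWspan i j]
      apply span_le.2
      rintro x ⟨t, rfl⟩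
      refine subset_span ⟨⟨⟨(⟨i, hiM⟩, ⟨j, Finset.mem_range.1 hj⟩), t⟩, rfl⟩, ?_⟩
      have hx : ((finBasis K ↥(W i j)) t : X) ∈ W i j := SetLike.coe_mem _
      exact (le_trans (hWle i j) (le_trans inf_le_left
        (hF (Finset.mem_range.1 hi)))) hx
    · have hFp : F p = ⊤ := le_antisymm le_top (hFM ▸ hF hpM.le)
      rw [hFp]
      rw [show (Set.range v ∩ ↑(⊤ : Submodule K X)) = Set.range v by simp]
      exact hspan
  have hadaptG : ∀ q, G q ≤ span K (Set.range v ∩ G q) := by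
    intro q
    rcases le_or_gt q L with hqL | hqL
    · have h1 : G q = F M2 ⊓ G q := by rw [hFM, top_inf_eq]
      conv_lhs => rw [h1, ← claim1 M2 q]
      apply Finset.sup_le
      intro i hi
      apply Finset.sup_le
      intro j hj
      have hjL : j < L := lt_of_lt_of_le (Finset.mem_range.1 hj) hqL
      rw [← hWspan i j]
      apply span_le.2
      rintro x ⟨t, rfl⟩
      refine subset_span ⟨⟨⟨(⟨i, Finset.mem_range.1 hi⟩, ⟨j, hjL⟩), t⟩, rfl⟩, ?_⟩
      have hx : ((finBasis K ↥(W i j)) t : X) ∈ W i j := SetLike.coe_mem _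
      exact (le_trans (hWle i j) (le_trans inf_le_right
        (hG (Finset.mem_range.1 hj)))) hx
    · have hGq : G q = ⊤ := le_antisymm le_top (hGL ▸ hG hqL.le)
      rw [hGq]
      rw [show (Set.range v ∩ ↑(⊤ : Submodule K X)) = Set.range v by simp]
      exact hspan
  refine ⟨_, b.reindex (Fintype.equivFin _), fun p => ?_, fun q => ?_⟩ <;>
    rw [Basis.range_reindex, hb] <;> apply le_antisymm
  · exact hadaptF p
  · exact span_le.2 Set.inter_subset_right
  · exact hadaptG q
  · exact span_le.2 Set.inter_subset_right

end Grid

open Classical in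
/-- The one-dimensional `S`-space attached to a vector `v` of an `S`-space `V`. -/
noncomputable def oneDim (V : PSp k S) (v : V.carrier) : PSp k S where
  carrier := k
  sub s := if v ∈ V.sub s then ⊤ else ⊥
  mono := by
    intro s t h
    by_cases hv : v ∈ V.sub s
    · rw [if_pos hv, if_pos (V.mono h hv)]
    · rw [if_neg hv]; exact bot_le

open Module Submodule in
lemma semisimple_of_adapted (V : PSp k S) {n : ℕ} (b : Basis (Fin n) k V.carrier)
    (hb : ∀ s, V.sub s = span k (Set.range ⇑b ∩ V.sub s)) :
    ∃ (m : ℕ) (W : Fin m → PSp k S),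
      (∀ i, finrank k (W i).carrier = 1) ∧ PIso V (dSum W) := by
  classical
  refine ⟨n, fun i => oneDim V (b i), fun i => finrank_self k, ?_⟩
  set e : V.carrier ≃ₗ[k] (Fin n → k) := b.equivFun with he
  refine ⟨⟨(e.toLinearMap : V.carrier →ₗ[k] ((i : Fin n) → (oneDim V (b i)).carrier)), ?_⟩,
    ⟨(e.symm.toLinearMap : ((i : Fin n) → (oneDim V (b i)).carrier) →ₗ[k] V.carrier), ?_⟩,
    ?_, ?_⟩
  · -- forward maps
    intro s x hx
    intro i _
    show e x i ∈ (if b i ∈ V.sub s then (⊤ : Submodule k k) else ⊥)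
    by_cases hbi : b i ∈ V.sub s
    · rw [if_pos hbi]; trivial
    · rw [if_neg hbi]
      have hxs : x ∈ span k (⇑b '' {j | b j ∈ V.sub s}) := by
        have := (hb s) ▸ hx
        refine span_mono ?_ this
        rintro y ⟨⟨j, rfl⟩, hy⟩
        exact ⟨j, hy, rfl⟩
      have hsupp := (Basis.mem_span_image b).1 hxs
      have : b.repr x i = 0 := by
        by_contra hne
        exact hbi (hsupp (Finsupp.mem_support_iff.2 hne))
      show b.equivFun x i = 0
      rw [Basis.equivFun_apply]
      exact this
  · -- backward maps
    intro s c hc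
    show e.symm c ∈ V.sub s
    rw [he, show b.equivFun.symm c = _ from Module.Basis.equivFun_symm_apply b c]
    apply Submodule.sum_mem
    intro i _
    by_cases hbi : b i ∈ V.sub s
    · exact Submodule.smul_mem _ _ hbi
    · have := hc i (Set.mem_univ i)
      have hci : c i ∈ (if b i ∈ V.sub s then (⊤ : Submodule k k) else ⊥) := this
      rw [if_neg hbi] at hci
      have : c i = 0 := hci
      rw [this]
      convert Submodule.zero_mem (V.sub s) using 1
      exact zero_smul k (b i)
  · apply PHom.ext
    show e.toLinearMap ∘ₗ e.symm.toLinearMap = LinearMap.id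
    ext x
    simp
  · apply PHom.ext
    show e.symm.toLinearMap ∘ₗ e.toLinearMap = LinearMap.id
    ext x
    simp

open Module Submodule in
lemma chain_to_filtration {K X : Type*} [Field K] [AddCommGroup X] [Module K X]
    [FiniteDimensional K X] {α : Type*} (C : Finset α) (g : α → Submodule K X)
    (hch : ∀ s ∈ C, ∀ t ∈ C, g s ≤ g t ∨ g t ≤ g s) :
    ∃ F : ℕ → Submodule K X, Monotone F ∧ F 0 = ⊥ ∧ F (finrank K X + 2) = ⊤ ∧
      ∀ s ∈ C, ∃ p, F p = g s := by
  classical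
  set f1 : ℕ → Submodule K X := fun m =>
    ⨆ (s : α) (_ : s ∈ C ∧ finrank K ↥(g s) ≤ m), g s with hf1
  have hf1mono : Monotone f1 := by
    intro a b hab
    exact iSup_le fun s => iSup_le fun hs =>
      le_iSup_of_le s (le_iSup_of_le ⟨hs.1, hs.2.trans hab⟩ le_rfl)
  set F : ℕ → Submodule K X := fun n =>
    if n = 0 then ⊥ else if finrank K X + 1 < n then ⊤ else f1 (n-1) with hF
  have hFmono : Monotone F := by
    intro a b hab
    by_cases ha : a = 0
    · simp [hF, ha]
    · by_cases hb : finrank K X + 1 < b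
      · rw [hF]
        simp only [if_neg (by omega : ¬ b = 0), if_pos hb]
        exact le_top
      · have hb0 : ¬ b = 0 := by omega
        have ha' : ¬ finrank K X + 1 < a := by omega
        rw [hF]
        simp only [if_neg ha, if_neg ha', if_neg hb0, if_neg hb]
        exact hf1mono (by omega)
  refine ⟨F, hFmono, by simp [hF], ?_, ?_⟩
  · rw [hF]
    simp only [if_neg (by omega : ¬ finrank K X + 2 = 0),
      if_pos (by omega : finrank K X + 1 < finrank K X + 2)]
  intro s hs
  refine ⟨finrank K ↥(g s) + 1, ?_⟩
  have hd : finrank K ↥(g s) ≤ finrank K X := Submodule.finrank_le (g s)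
  rw [hF]
  simp only [if_neg (Nat.succ_ne_zero _),
    if_neg (by omega : ¬ finrank K X + 1 < finrank K ↥(g s) + 1), Nat.add_sub_cancel]
  apply le_antisymm
  · apply iSup_le; intro t; apply iSup_le; rintro ⟨htC, hle⟩
    rcases hch t htC s hs with h | h
    · exact h
    · exact (Submodule.eq_of_le_of_finrank_le h hle).ge
  · exact le_iSup_of_le s (le_iSup_of_le ⟨hs, le_rfl⟩ le_rfl)

open Module Submodule in
lemma backward_dir (hw : ∀ A : Set S, IsAntichain (· ≤ ·) A → A.ncard ≤ 2) (V : PSp k S) :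
    ∃ (n : ℕ) (W : Fin n → PSp k S),
      (∀ i, finrank k (W i).carrier = 1) ∧ PIso V (dSum W) := by
  classical
  have h3 : ∀ x y z : S, x ∈ (Finset.univ : Finset S) → y ∈ Finset.univ → z ∈ Finset.univ →
      (¬ x ≤ y ∧ ¬ y ≤ x) → (¬ x ≤ z ∧ ¬ z ≤ x) → (¬ y ≤ z ∧ ¬ z ≤ y) → False := by
    intro x y z _ _ _ hxy hxz hyz
    have hxy' : x ≠ y := fun h => hxy.1 (h ▸ le_refl x)
    have hxz' : x ≠ z := fun h => hxz.1 (h ▸ le_refl x)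
    have hyz' : y ≠ z := fun h => hyz.1 (h ▸ le_refl y)
    have hanti : IsAntichain (· ≤ ·) ({x, y, z} : Set S) := by
      intro p hp q hq hpq
      simp only [Set.mem_insert_iff, Set.mem_singleton_iff] at hp hq
      rcases hp with rfl|rfl|rfl <;> rcases hq with rfl|rfl|rfl <;>
        first
        | exact absurd rfl hpq
        | exact hxy.1 | exact hxy.2 | exact hxz.1 | exact hxz.2 | exact hyz.1 | exact hyz.2
    have hle := hw {x, y, z} hanti
    rw [Set.ncard_eq_three.2 ⟨x, y, z, hxy', hxz', hyz', rfl⟩] at hle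
    omega
  obtain ⟨C1, C2, hU, h1, h2⟩ := dilworth2 (Finset.univ.card) (Finset.univ : Finset S) rfl h3
  have hch1 : ∀ s ∈ C1, ∀ t ∈ C1, V.sub s ≤ V.sub t ∨ V.sub t ≤ V.sub s := by
    intro s hs t ht
    rcases eq_or_ne s t with rfl | hne
    · exact Or.inl le_rfl
    · rcases h1 (Finset.mem_coe.2 hs) (Finset.mem_coe.2 ht) hne with h | h
      · exact Or.inl (V.mono h)
      · exact Or.inr (V.mono h)
  have hch2 : ∀ s ∈ C2, ∀ t ∈ C2, V.sub s ≤ V.sub t ∨ V.sub t ≤ V.sub s := by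
    intro s hs t ht
    rcases eq_or_ne s t with rfl | hne
    · exact Or.inl le_rfl
    · rcases h2 (Finset.mem_coe.2 hs) (Finset.mem_coe.2 ht) hne with h | h
      · exact Or.inl (V.mono h)
      · exact Or.inr (V.mono h)
  obtain ⟨F, hFm, hF0, hFM, hFr⟩ := chain_to_filtration C1 V.sub hch1
  obtain ⟨G, hGm, hG0, hGL, hGr⟩ := chain_to_filtration C2 V.sub hch2
  obtain ⟨n, b, hbF, hbG⟩ := exists_adapted_basis F G hFm hGm hF0 hG0 hFM hGL
  apply semisimple_of_adapted V b
  intro s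
  have hs : s ∈ C1 ∪ C2 := by rw [hU]; exact Finset.mem_univ s
  rcases Finset.mem_union.1 hs with hs | hs
  · obtain ⟨p, hp⟩ := hFr s hs
    rw [← hp]
    exact hbF p
  · obtain ⟨p, hp⟩ := hGr s hs
    rw [← hp]
    exact hbG p

open Classical in
/-- The `S`-space on `k × k` with three lines attached to `a`, `b`, `c`. -/
noncomputable def threeLines (k : Type) [Field k] {S : Type} [PartialOrder S]
    (a b c : S) : PSp k S where
  carrier := k × k
  sub s := (if a ≤ s then Submodule.span k {((1:k),(0:k))} else ⊥) ⊔
    ((if b ≤ s then Submodule.span k {((0:k),(1:k))} else ⊥) ⊔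
     (if c ≤ s then Submodule.span k {((1:k),(1:k))} else ⊥))
  mono := by
    intro s t h
    have key : ∀ (x : S) (L : Submodule k (k × k)),
        (if x ≤ s then L else ⊥) ≤ (if x ≤ t then L else ⊥) := by
      intro x L
      by_cases hx : x ≤ s
      · rw [if_pos hx, if_pos (hx.trans h)]
      · rw [if_neg hx]; exact bot_le
    exact sup_le_sup (key a _) (sup_le_sup (key b _) (key c _))

open Module Submodule in
lemma forward_aux {a b c : S} (hab : ¬a ≤ b ∧ ¬b ≤ a) (hac : ¬a ≤ c ∧ ¬c ≤ a)
    (hbc : ¬b ≤ c ∧ ¬c ≤ b)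
    (hss : ∃ (n : ℕ) (W : Fin n → PSp k S), (∀ i, finrank k (W i).carrier = 1) ∧
      PIso (threeLines k a b c) (dSum W)) : False := by
  classical
  set T := threeLines k a b c with hT
  set La : Submodule k (k × k) := Submodule.span k {((1:k),(0:k))} with hLa
  set Lb : Submodule k (k × k) := Submodule.span k {((0:k),(1:k))} with hLb
  set Lc : Submodule k (k × k) := Submodule.span k {((1:k),(1:k))} with hLc
  have hTa : T.sub a = La := by
    show (if a ≤ a then La else ⊥) ⊔ ((if b ≤ a then Lb else ⊥) ⊔ (if c ≤ a then Lc else ⊥)) = La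
    rw [if_pos le_rfl, if_neg hab.2, if_neg hac.2]
    simp
  have hTb : T.sub b = Lb := by
    show (if a ≤ b then La else ⊥) ⊔ ((if b ≤ b then Lb else ⊥) ⊔ (if c ≤ b then Lc else ⊥)) = Lb
    rw [if_neg hab.1, if_pos le_rfl, if_neg hbc.2]
    simp
  have hTc : T.sub c = Lc := by
    show (if a ≤ c then La else ⊥) ⊔ ((if b ≤ c then Lb else ⊥) ⊔ (if c ≤ c then Lc else ⊥)) = Lc
    rw [if_neg hac.1, if_neg hbc.1, if_pos le_rfl]
    simp
  obtain ⟨n, W, hW1, f, g, hfg, hgf⟩ := hss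
  have hfgl : f.toLinearMap ∘ₗ g.toLinearMap = LinearMap.id := congrArg PHom.toLinearMap hfg
  have hgfl : g.toLinearMap ∘ₗ f.toLinearMap = LinearMap.id := congrArg PHom.toLinearMap hgf
  have hinj : Function.Injective f.toLinearMap := by
    intro x y hxy
    have hx := DFunLike.congr_fun hgfl x
    have hy := DFunLike.congr_fun hgfl y
    simp only [LinearMap.coe_comp, Function.comp_apply, LinearMap.id_coe, id_eq] at hx hy
    rw [← hx, ← hy, hxy]
  -- n = 2
  have hn : n = 2 := by
    have he : T.carrier ≃ₗ[k] (dSum W).carrier :=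
      LinearEquiv.ofLinear f.toLinearMap g.toLinearMap hfgl hgfl
    have h1 := he.finrank_eq
    have h2 : finrank k T.carrier = 2 := by
      show finrank k (k × k) = 2
      rw [Module.finrank_prod, Module.finrank_self]
    have h3 : finrank k (dSum W).carrier = n := by
      show finrank k ((i : Fin n) → (W i).carrier) = n
      rw [Module.finrank_pi_fintype]
      simp [hW1]
    omega
  subst hn
  -- images of subspaces
  have key : ∀ s : S, Submodule.map f.toLinearMap (T.sub s) = (dSum W).sub s := by
    intro s
    apply le_antisymm
    · rintro y ⟨x, hx, rfl⟩
      exact f.maps s x hx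
    · intro y hy
      refine ⟨g.toLinearMap y, g.maps s y hy, DFunLike.congr_fun hfgl y⟩
  have hmapinj := Submodule.map_injective_of_injective hinj
  -- distinctness of lines
  have h10La : ((1:k),(0:k)) ∈ La := subset_span rfl
  have h01Lb : ((0:k),(1:k)) ∈ Lb := subset_span rfl
  have h11Lc : ((1:k),(1:k)) ∈ Lc := subset_span rfl
  have h01La : ((0:k),(1:k)) ∉ La := by
    intro h
    obtain ⟨t, ht⟩ := mem_span_singleton.1 h
    have := congrArg Prod.snd ht
    simp at this
  have h11La : ((1:k),(1:k)) ∉ La := by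
    intro h
    obtain ⟨t, ht⟩ := mem_span_singleton.1 h
    have := congrArg Prod.snd ht
    simp at this
  have h11Lb : ((1:k),(1:k)) ∉ Lb := by
    intro h
    obtain ⟨t, ht⟩ := mem_span_singleton.1 h
    have := congrArg Prod.fst ht
    simp at this
  have h10Lc : ((1:k),(0:k)) ∉ Lc := by
    intro h
    obtain ⟨t, ht⟩ := mem_span_singleton.1 h
    have h1 := congrArg Prod.fst ht
    have h2 := congrArg Prod.snd ht
    simp at h1 h2
    rw [h2] at h1
    exact one_ne_zero h1.symm
  have hLab : La ≠ Lb := fun h => h01La (h ▸ h01Lb)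
  have hLac : La ≠ Lc := fun h => h11La (h ▸ h11Lc)
  have hLbc : Lb ≠ Lc := fun h => h11Lb (h ▸ h11Lc)
  -- nonbot/nontop of the images
  have hPbot : ∀ (s : S) (x : T.carrier), x ∈ T.sub s → x ≠ 0 → (dSum W).sub s ≠ ⊥ := by
    intro s x hx hx0 hbot
    have : f.toLinearMap x ∈ (dSum W).sub s := f.maps s x hx
    rw [hbot] at this
    exact hx0 (hinj (by simpa using this))
  have hPtop : ∀ (s : S) (x : T.carrier), x ∉ T.sub s → (dSum W).sub s ≠ ⊤ := by
    intro s x hx htop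
    have hmem : f.toLinearMap x ∈ (dSum W).sub s := by rw [htop]; trivial
    rw [← key s] at hmem
    obtain ⟨y, hy, hyx⟩ := hmem
    exact hx (hinj hyx ▸ hy)
  have h10ne : ((1:k),(0:k)) ≠ (0 : k × k) := by
    intro h
    exact one_ne_zero (congrArg Prod.fst h)
  have h01ne : ((0:k),(1:k)) ≠ (0 : k × k) := by
    intro h
    exact one_ne_zero (congrArg Prod.snd h)
  have h11ne : ((1:k),(1:k)) ≠ (0 : k × k) := by
    intro h
    exact one_ne_zero (congrArg Prod.fst h)
  have hanb : (dSum W).sub a ≠ ⊥ := hPbot a _ (hTa ▸ h10La) h10ne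
  have hant : (dSum W).sub a ≠ ⊤ := hPtop a _ (fun h => h01La (hTa ▸ h)) 
  have hbnb : (dSum W).sub b ≠ ⊥ := hPbot b _ (hTb ▸ h01Lb) h01ne
  have hbnt : (dSum W).sub b ≠ ⊤ := hPtop b _ (fun h => h11Lb (hTb ▸ h))
  have hcnb : (dSum W).sub c ≠ ⊥ := hPbot c _ (hTc ▸ h11Lc) h11ne
  have hcnt : (dSum W).sub c ≠ ⊤ := hPtop c _ (fun h => h10Lc (hTc ▸ h))
  -- dichotomy for components
  have hdich : ∀ (i : Fin 2) (s : S), (W i).sub s = ⊥ ∨ (W i).sub s = ⊤ := by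
    intro i s
    have hle : finrank k ↥((W i).sub s) ≤ 1 := (hW1 i) ▸ Submodule.finrank_le _
    rcases Nat.le_one_iff_eq_zero_or_eq_one.1 hle with h | h
    · exact Or.inl (Submodule.finrank_eq_zero.1 h)
    · exact Or.inr (Submodule.eq_top_of_finrank_eq (h.trans (hW1 i).symm))
  have hbotbot : ∀ s : S, (W 0).sub s = ⊥ → (W 1).sub s = ⊥ → (dSum W).sub s = ⊥ := by
    intro s h0 h1
    rw [eq_bot_iff]
    intro x hx
    have hx' : ∀ i : Fin 2, x i ∈ (W i).sub s := fun i => hx i (Set.mem_univ i)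
    have hz : ∀ i : Fin 2, x i = 0 := fun i =>
      match i with
      | 0 => by have h := hx' 0; rw [h0] at h; simpa using h
      | 1 => by have h := hx' 1; rw [h1] at h; simpa using h
    have hx0 : x = 0 := funext hz
    simp [hx0]
  have htoptop : ∀ s : S, (W 0).sub s = ⊤ → (W 1).sub s = ⊤ → (dSum W).sub s = ⊤ := by
    intro s h0 h1
    rw [eq_top_iff]
    intro x _ i _
    show x i ∈ (W i).sub s
    match i with
    | 0 => rw [h0]; trivial
    | 1 => rw [h1]; trivial
  have hpat : ∀ s t : S, (W 0).sub s = (W 0).sub t → (W 1).sub s = (W 1).sub t →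
      (dSum W).sub s = (dSum W).sub t := by
    intro s t h0 h1
    show Submodule.pi Set.univ _ = Submodule.pi Set.univ _
    congr 1
    funext i
    match i with
    | 0 => exact h0
    | 1 => exact h1
  have hdet : ∀ s : S, (dSum W).sub s ≠ ⊥ → (dSum W).sub s ≠ ⊤ →
      ((W 0).sub s = ⊥ ∧ (W 1).sub s = ⊤) ∨ ((W 0).sub s = ⊤ ∧ (W 1).sub s = ⊥) := by
    intro s hnb hnt
    rcases hdich 0 s with h0 | h0 <;> rcases hdich 1 s with h1 | h1
    · exact absurd (hbotbot s h0 h1) hnb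
    · exact Or.inl ⟨h0, h1⟩
    · exact Or.inr ⟨h0, h1⟩
    · exact absurd (htoptop s h0 h1) hnt
  have hne : ∀ s t : S, T.sub s ≠ T.sub t → (dSum W).sub s ≠ (dSum W).sub t := by
    intro s t hst heq
    apply hst
    apply hmapinj
    rw [key s, key t, heq]
  have Hab : (dSum W).sub a ≠ (dSum W).sub b := hne a b (by rw [hTa, hTb]; exact hLab)
  have Hac : (dSum W).sub a ≠ (dSum W).sub c := hne a c (by rw [hTa, hTc]; exact hLac)
  have Hbc : (dSum W).sub b ≠ (dSum W).sub c := hne b c (by rw [hTb, hTc]; exact hLbc)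
  rcases hdet a hanb hant with ⟨ha0, ha1⟩ | ⟨ha0, ha1⟩ <;>
    rcases hdet b hbnb hbnt with ⟨hb0, hb1⟩ | ⟨hb0, hb1⟩ <;>
    rcases hdet c hcnb hcnt with ⟨hc0, hc1⟩ | ⟨hc0, hc1⟩ <;>
    first
    | exact Hab (hpat a b (ha0.trans hb0.symm) (ha1.trans hb1.symm))
    | exact Hac (hpat a c (ha0.trans hc0.symm) (ha1.trans hc1.symm))
    | exact Hbc (hpat b c (hb0.trans hc0.symm) (hb1.trans hc1.symm))

/-- Every `S`-space is semisimple (a direct sum of `S`-spaces with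
one-dimensional ambient space) iff the width of `S` is at most `2`. -/
theorem stmt16 :
    (∀ V : PSp k S, ∃ (n : ℕ) (W : Fin n → PSp k S),
      (∀ i, Module.finrank k (W i).carrier = 1) ∧ PIso V (dSum W)) ↔
    (∀ A : Set S, IsAntichain (· ≤ ·) A → A.ncard ≤ 2) := by
  constructor
  · intro hss A hA
    by_contra hcn
    push_neg at hcn
    obtain ⟨B, hBA, hB3⟩ := Set.exists_subset_card_eq hcn
    obtain ⟨a, b, c, hab, hac, hbc, rfl⟩ := Set.ncard_eq_three.1 hB3
    have haA : a ∈ A := hBA (by simp)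
    have hbA : b ∈ A := hBA (by simp)
    have hcA : c ∈ A := hBA (by simp)
    exact forward_aux ⟨hA haA hbA hab, hA hbA haA hab.symm⟩
      ⟨hA haA hcA hac, hA hcA haA hac.symm⟩
      ⟨hA hbA hcA hbc, hA hcA hbA hbc.symm⟩
      (hss (threeLines k a b c))
  · intro hw V
    exact backward_dir hw V
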